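/- Let x₁, x₂, x₃, x₄ be the roots of a monic quartic p(x) = x⁴ + a x³ + b x² + c x + d with d ≠ 0, labeled continuously as functions of the coefficients over a connected parameter region Ω, and suppose that throughout Ω we have |x₂| ≥ |x₁| > |x₃| ≥ |x₄| (a persistent spectral gap between the two largest-modulus roots and the two smallest). If the coefficients a, b, c, d are holomorphic functions on Ω ⊆ ℂⁿ, then the product x₁ x₂ of the two largest-modulus roots is a single-valued holomorphic function on Ω. -/

import Mathlib

open Asymptotics Filter Topology

noncomputable section ProofAux

/-- Sextic whose roots are the six pairwise products of roots of `x⁴+Ax³+Bx²+Cx+D`. -/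
def Gp (A B C D y : ℂ) : ℂ :=
  (y^2+D)^3 - B*y*(y^2+D)^2 + (A*C-4*D)*y^2*(y^2+D) - (A^2*D + C^2 - 4*B*D)*y^3

/-- Difference-quotient polynomial for `Gp` in the `y` variable. -/
def Qp (A B C D y z : ℂ) : ℂ :=
  (y^5+y^4*z+y^3*z^2+y^2*z^3+y*z^4+z^5)
  + (-B)*(y^4+y^3*z+y^2*z^2+y*z^3+z^4)
  + (A*C-D)*(y^3+y^2*z+y*z^2+z^3)
  + (2*B*D-A^2*D-C^2)*(y^2+y*z+z^2)
  + (A*C*D-D^2)*(y+z)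
  + (-B*D^2)

lemma Gp_factor (x1 x2 x3 x4 y : ℂ) :
    Gp (-(x1+x2+x3+x4)) (x1*x2+x1*x3+x1*x4+x2*x3+x2*x4+x3*x4)
      (-(x1*x2*x3+x1*x2*x4+x1*x3*x4+x2*x3*x4)) (x1*x2*x3*x4) y =
    (y - x1*x2)*(y - x1*x3)*(y - x1*x4)*(y - x2*x3)*(y - x2*x4)*(y - x3*x4) := by
  simp only [Gp]; ring

lemma Gp_sub (A B C D y z : ℂ) :
    Gp A B C D y - Gp A B C D z = (y - z) * Qp A B C D y z := by
  simp only [Gp, Qp]; ring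

lemma Qp_factor (x1 x2 x3 x4 y : ℂ) :
    Qp (-(x1+x2+x3+x4)) (x1*x2+x1*x3+x1*x4+x2*x3+x2*x4+x3*x4)
      (-(x1*x2*x3+x1*x2*x4+x1*x3*x4+x2*x3*x4)) (x1*x2*x3*x4) y (x1*x2) =
    (y - x1*x3)*(y - x1*x4)*(y - x2*x3)*(y - x2*x4)*(y - x3*x4) := by
  simp only [Qp]; ring

end ProofAux

theorem product_of_large_roots_holomorphic (n : ℕ) (Ω : Set (Fin n → ℂ))
    (hΩo : IsOpen Ω) (hΩc : IsConnected Ω)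
    (a b c d x₁ x₂ x₃ x₄ : (Fin n → ℂ) → ℂ)
    (ha : DifferentiableOn ℂ a Ω) (hb : DifferentiableOn ℂ b Ω)
    (hc : DifferentiableOn ℂ c Ω) (hd : DifferentiableOn ℂ d Ω)
    (hd0 : ∀ w ∈ Ω, d w ≠ 0)
    (hx₁ : ContinuousOn x₁ Ω) (hx₂ : ContinuousOn x₂ Ω)
    (hx₃ : ContinuousOn x₃ Ω) (hx₄ : ContinuousOn x₄ Ω)
    (hroots : ∀ w ∈ Ω, ∀ x : ℂ,
      x ^ 4 + a w * x ^ 3 + b w * x ^ 2 + c w * x + d w =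
        (x - x₁ w) * (x - x₂ w) * (x - x₃ w) * (x - x₄ w))
    (hgap : ∀ w ∈ Ω, ‖x₂ w‖ ≥ ‖x₁ w‖ ∧ ‖x₁ w‖ > ‖x₃ w‖ ∧ ‖x₃ w‖ ≥ ‖x₄ w‖) :
    DifferentiableOn ℂ (fun w => x₁ w * x₂ w) Ω := by
  -- coefficient identities (Vieta) extracted from the root factorization
  have hcoef : ∀ w ∈ Ω,
      a w = -(x₁ w + x₂ w + x₃ w + x₄ w) ∧
      b w = x₁ w*x₂ w+x₁ w*x₃ w+x₁ w*x₄ w+x₂ w*x₃ w+x₂ w*x₄ w+x₃ w*x₄ w ∧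
      c w = -(x₁ w*x₂ w*x₃ w+x₁ w*x₂ w*x₄ w+x₁ w*x₃ w*x₄ w+x₂ w*x₃ w*x₄ w) ∧
      d w = x₁ w*x₂ w*x₃ w*x₄ w := by
    intro w hw
    have h0 := hroots w hw 0
    have h1 := hroots w hw 1
    have hm1 := hroots w hw (-1)
    have h2 := hroots w hw 2
    have hm2 := hroots w hw (-2)
    refine ⟨?_, ?_, ?_, ?_⟩
    · linear_combination (-1/6 : ℂ) * h1 + (1/6 : ℂ) * hm1 + (1/12 : ℂ) * h2 + (-1/12 : ℂ) * hm2
    · linear_combination (-5/4 : ℂ) * h0 + (2/3 : ℂ) * h1 + (2/3 : ℂ) * hm1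
        + (-1/24 : ℂ) * h2 + (-1/24 : ℂ) * hm2
    · linear_combination (2/3 : ℂ) * h1 + (-2/3 : ℂ) * hm1 + (-1/12 : ℂ) * h2 + (1/12 : ℂ) * hm2
    · linear_combination h0
  intro w₀ hw₀
  set g : (Fin n → ℂ) → ℂ := fun w => x₁ w * x₂ w with hgdef
  set y₀ : ℂ := x₁ w₀ * x₂ w₀ with hy₀
  set Qf : (Fin n → ℂ) → ℂ := fun w => Qp (a w) (b w) (c w) (d w) (g w) y₀ with hQfdef
  set G₀ : (Fin n → ℂ) → ℂ := fun w => Gp (a w) (b w) (c w) (d w) y₀ with hG₀def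
  set H : ℂ := Qf w₀ with hHdef
  have hΩnhds : Ω ∈ 𝓝 w₀ := hΩo.mem_nhds hw₀
  -- the fundamental relation
  have hrel : ∀ w ∈ Ω, (g w - y₀) * Qf w = -G₀ w := by
    intro w hw
    obtain ⟨ea, eb, ec, ed⟩ := hcoef w hw
    have hGz : Gp (a w) (b w) (c w) (d w) (g w) = 0 := by
      rw [ea, eb, ec, ed, hgdef]
      simp only []
      rw [Gp_factor]; ring
    have hsub := Gp_sub (a w) (b w) (c w) (d w) (g w) y₀
    rw [hGz] at hsub
    simp only [hQfdef, hG₀def]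
    linear_combination -hsub
  -- nonvanishing of Qf at w₀
  have hH : H ≠ 0 := by
    obtain ⟨ea, eb, ec, ed⟩ := hcoef w₀ hw₀
    obtain ⟨g1, g2, g3⟩ := hgap w₀ hw₀
    have h3nn : (0:ℝ) ≤ ‖x₃ w₀‖ := norm_nonneg _
    have h4nn : (0:ℝ) ≤ ‖x₄ w₀‖ := norm_nonneg _
    have h1pos : (0:ℝ) < ‖x₁ w₀‖ := lt_of_le_of_lt h3nn g2
    have hx1ne : x₁ w₀ ≠ 0 := norm_pos_iff.mp h1pos
    have hx2ne : x₂ w₀ ≠ 0 := norm_pos_iff.mp (lt_of_lt_of_le h1pos g1)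
    have h13 : x₁ w₀ ≠ x₃ w₀ := by
      intro h; rw [h] at g2; exact lt_irrefl _ g2
    have h14 : x₁ w₀ ≠ x₄ w₀ := by
      intro h; rw [h] at g2; exact absurd g3 (not_le.mpr g2)
    have h23 : x₂ w₀ ≠ x₃ w₀ := by
      intro h; rw [h] at g1; exact absurd g1 (not_le.mpr g2)
    have h24 : x₂ w₀ ≠ x₄ w₀ := by
      intro h; rw [h] at g1
      exact absurd (le_trans g1 g3) (not_le.mpr g2)
    have h34 : y₀ ≠ x₃ w₀ * x₄ w₀ := by
      intro h
      have : ‖y₀‖ = ‖x₃ w₀‖ * ‖x₄ w₀‖ := by rw [h, norm_mul]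
      rw [hy₀, norm_mul] at this
      nlinarith
    have hQval : Qf w₀ =
        (y₀ - x₁ w₀*x₃ w₀)*(y₀ - x₁ w₀*x₄ w₀)*(y₀ - x₂ w₀*x₃ w₀)
          *(y₀ - x₂ w₀*x₄ w₀)*(y₀ - x₃ w₀*x₄ w₀) := by
      simp only [hQfdef]
      rw [ea, eb, ec, ed]
      have : g w₀ = x₁ w₀ * x₂ w₀ := rfl
      rw [this, Qp_factor]
    rw [hHdef, hQval]
    refine mul_ne_zero (mul_ne_zero (mul_ne_zero (mul_ne_zero ?_ ?_) ?_) ?_) ?_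
    · rw [hy₀, ← mul_sub]; exact mul_ne_zero hx1ne (sub_ne_zero.mpr h23)
    · rw [hy₀, ← mul_sub]; exact mul_ne_zero hx1ne (sub_ne_zero.mpr h24)
    · rw [hy₀, show x₁ w₀ * x₂ w₀ - x₂ w₀ * x₃ w₀ = x₂ w₀ * (x₁ w₀ - x₃ w₀) by ring]
      exact mul_ne_zero hx2ne (sub_ne_zero.mpr h13)
    · rw [hy₀, show x₁ w₀ * x₂ w₀ - x₂ w₀ * x₄ w₀ = x₂ w₀ * (x₁ w₀ - x₄ w₀) by ring]
      exact mul_ne_zero hx2ne (sub_ne_zero.mpr h14)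
    · exact sub_ne_zero.mpr h34
  -- continuity of Qf on Ω
  have hgc : ContinuousOn g Ω := hx₁.mul hx₂
  have hQc : ContinuousOn Qf Ω := by
    have := ha.continuousOn; have := hb.continuousOn
    have := hc.continuousOn; have := hd.continuousOn
    simp only [hQfdef, Qp]
    fun_prop (disch := assumption)
  have hQca : ContinuousAt Qf w₀ := hQc.continuousAt hΩnhds
  -- differentiability of G₀ at w₀
  have haA : DifferentiableAt ℂ a w₀ := ha.differentiableAt hΩnhds
  have hbA : DifferentiableAt ℂ b w₀ := hb.differentiableAt hΩnhds
  have hcA : DifferentiableAt ℂ c w₀ := hc.differentiableAt hΩnhds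
  have hdA : DifferentiableAt ℂ d w₀ := hd.differentiableAt hΩnhds
  have hG₀d : DifferentiableAt ℂ G₀ w₀ := by
    simp only [hG₀def, Gp]
    fun_prop (disch := assumption)
  set L : (Fin n → ℂ) →L[ℂ] ℂ := fderiv ℂ G₀ w₀ with hLdef
  have hL : HasFDerivAt G₀ L w₀ := hG₀d.hasFDerivAt
  have hG₀z : G₀ w₀ = 0 := by
    have h := hrel w₀ hw₀
    have hgy : g w₀ = y₀ := rfl
    rw [hgy, sub_self, zero_mul] at h
    exact neg_eq_zero.mp h.symm
  -- little-o estimates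
  have hA : (fun w => G₀ w - L (w - w₀)) =o[nhds w₀] fun w => w - w₀ := by
    have h := hL.isLittleO
    simpa [hG₀z] using h
  have hA' : (fun w => -H * (G₀ w - L (w - w₀))) =o[nhds w₀] fun w => w - w₀ :=
    hA.const_mul_left (-H)
  have hB : (fun w => Qf w - H) =o[nhds w₀] fun _ => (1:ℝ) := by
    rw [Asymptotics.isLittleO_one_iff]
    have h : ContinuousAt (fun w => Qf w - H) w₀ := hQca.sub continuousAt_const
    simpa [ContinuousAt, hHdef] using h
  have hC : (fun w => L (w - w₀)) =O[nhds w₀] fun w => ‖w - w₀‖ :=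
    (L.isBigO_comp _ _).norm_right
  have hBC : (fun w => (Qf w - H) * L (w - w₀)) =o[nhds w₀] fun w => w - w₀ := by
    have h := hB.mul_isBigO hC
    simp only [one_mul] at h
    exact h.of_norm_right
  have hN : (fun w => -H * (G₀ w - L (w - w₀)) + (Qf w - H) * L (w - w₀)) =o[nhds w₀]
      fun w => w - w₀ := hA'.add hBC
  have hQHne : Qf w₀ * H ≠ 0 := mul_ne_zero (hHdef ▸ hH) hH
  have hInv : (fun w => (Qf w * H)⁻¹) =O[nhds w₀] fun _ => (1:ℝ) := by
    have ht : ContinuousAt (fun w => (Qf w * H)⁻¹) w₀ :=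
      (hQca.mul continuousAt_const).inv₀ hQHne
    exact ht.isBigO_one ℝ
  have hfinal : (fun w => (-H * (G₀ w - L (w - w₀)) + (Qf w - H) * L (w - w₀)) * (Qf w * H)⁻¹)
      =o[nhds w₀] fun w => w - w₀ := by
    have h := hN.norm_right.mul_isBigO hInv
    simp only [mul_one] at h
    exact h.of_norm_right
  -- eventual equality with the difference quotient of g
  have hQne : ∀ᶠ w in nhds w₀, Qf w ≠ 0 := hQca.eventually_ne hH
  have heq : (fun w => g w - g w₀ - (-(H⁻¹) • L) (w - w₀)) =ᶠ[nhds w₀]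
      (fun w => (-H * (G₀ w - L (w - w₀)) + (Qf w - H) * L (w - w₀)) * (Qf w * H)⁻¹) := by
    filter_upwards [hQne, hΩnhds] with w hQ hw
    have hr := hrel w hw
    have hgy : g w₀ = y₀ := rfl
    simp only [ContinuousLinearMap.smul_apply, ContinuousLinearMap.neg_apply, smul_eq_mul, hgy]
    field_simp
    linear_combination H * hr
  have hfd : HasFDerivAt g (-(H⁻¹) • L) w₀ :=
    .of_isLittleO (hfinal.congr' heq.symm Filter.EventuallyEq.rfl)
  exact hfd.differentiableAt.differentiableWithinAt
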